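/- For density operators ρ, σ, τ on a finite-dimensional Hilbert space, if P(ρ,σ)² + P(σ,τ)² ≤ 1, then P(ρ,τ) ≤ P(ρ,σ)·F(σ,τ) + P(σ,τ)·F(ρ,σ), where F is the fidelity and P(x,y) = sqrt(1 - F(x,y)²) is the purified distance. -/

import Mathlib

open Matrix Filter
open scoped ComplexOrder Classical Kronecker

variable {n : Type*} [Fintype n] [DecidableEq n]

/-- Square root of a positive semidefinite matrix (0 if not PSD). -/
noncomputable def msqrt (A : Matrix n n ℂ) : Matrix n n ℂ :=
  if h : A.PosSemidef then
    (h.1.eigenvectorUnitary : Matrix n n ℂ) * diagonal ((↑) ∘ (√·) ∘ h.1.eigenvalues) *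
      (star h.1.eigenvectorUnitary : Matrix n n ℂ)
  else 0

/-- Trace norm ‖A‖₁ = Tr √(AᴴA). -/
noncomputable def traceNorm (A : Matrix n n ℂ) : ℝ :=
  ((msqrt (Aᴴ * A)).trace).re

/-- Fidelity F(ρ,σ) = ‖√ρ √σ‖₁. -/
noncomputable def fidelity (ρ σ : Matrix n n ℂ) : ℝ :=
  traceNorm (msqrt ρ * msqrt σ)

/-- Purified distance for normalized states. -/
noncomputable def purifiedDist (ρ σ : Matrix n n ℂ) : ℝ :=
  Real.sqrt (1 - (fidelity ρ σ) ^ 2)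

/-- Density operator predicate. -/
def IsDensity (ρ : Matrix n n ℂ) : Prop := ρ.PosSemidef ∧ ρ.trace = 1

/-- Subnormalized state predicate. -/
def IsSubnormalized (ρ : Matrix n n ℂ) : Prop := ρ.PosSemidef ∧ ρ.trace.re ≤ 1

/-- Generalized fidelity for subnormalized states. -/
noncomputable def genFidelity (ρ σ : Matrix n n ℂ) : ℝ :=
  traceNorm (msqrt ρ * msqrt σ) + Real.sqrt ((1 - ρ.trace.re) * (1 - σ.trace.re))

/-- Purified distance via the generalized fidelity. -/
noncomputable def purifiedDistG (ρ σ : Matrix n n ℂ) : ℝ :=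
  Real.sqrt (1 - (genFidelity ρ σ) ^ 2)

/-- Max-relative entropy (base 2). -/
noncomputable def Dmax (ρ σ : Matrix n n ℂ) : ℝ :=
  sInf {l : ℝ | ((2:ℝ) ^ l • σ - ρ).PosSemidef}

/-- Min-relative entropy (base 2). -/
noncomputable def Dmin (ρ σ : Matrix n n ℂ) : ℝ :=
  -Real.logb 2 ((fidelity ρ σ) ^ 2)

/-- ε-ball of subnormalized states around ρ in purified distance. -/
def epsBall (ε : ℝ) (ρ : Matrix n n ℂ) : Set (Matrix n n ℂ) :=
  {ρ' | IsSubnormalized ρ' ∧ purifiedDistG ρ ρ' ≤ ε}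

/-- Matrix logarithm via the hermitian functional calculus (0 if not Hermitian). -/
noncomputable def mlog (A : Matrix n n ℂ) : Matrix n n ℂ :=
  if h : A.IsHermitian then h.cfc Real.log else 0

/-- Quantum relative entropy D(ρ‖σ) = Tr ρ(log ρ − log σ). -/
noncomputable def relEnt (ρ σ : Matrix n n ℂ) : ℝ :=
  ((ρ * (mlog ρ - mlog σ)).trace).re

/-- Relative entropy variance V(ρ‖σ). -/
noncomputable def relVar (ρ σ : Matrix n n ℂ) : ℝ :=
  ((ρ * (mlog ρ - mlog σ) ^ 2).trace).re - (relEnt ρ σ) ^ 2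

/-- Varentropy V(A)_ρ = Tr(ρ (log ρ)²) − (Tr ρ log ρ)². -/
noncomputable def varentropy (ρ : Matrix n n ℂ) : ℝ :=
  ((ρ * (mlog ρ) ^ 2).trace).re - (((ρ * mlog ρ).trace).re) ^ 2

/-- Partial trace over the second (B) register. -/
noncomputable def ptraceB {A B : Type*} [Fintype A] [Fintype B]
    (M : Matrix (A × B) (A × B) ℂ) : Matrix A A ℂ :=
  Matrix.of fun a a' => ∑ b, M (a, b) (a', b)

/-- Partial trace over the first (A) register. -/
noncomputable def ptraceA {A B : Type*} [Fintype A] [Fintype B]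
    (M : Matrix (A × B) (A × B) ℂ) : Matrix B B ℂ :=
  Matrix.of fun b b' => ∑ a, M (a, b) (a, b')


set_option linter.unusedSectionVars false
set_option maxHeartbeats 1000000

open scoped InnerProductSpace

noncomputable def Matrix.PosSemidef.sqrt {A : Matrix n n ℂ} (h : A.PosSemidef) : Matrix n n ℂ :=
  (h.1.eigenvectorUnitary : Matrix n n ℂ) * diagonal ((↑) ∘ (√·) ∘ h.1.eigenvalues) *
      (star h.1.eigenvectorUnitary : Matrix n n ℂ)

lemma Matrix.PosSemidef.posSemidef_sqrt {A : Matrix n n ℂ} (h : A.PosSemidef) :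
    h.sqrt.PosSemidef := by
  unfold Matrix.PosSemidef.sqrt
  rw [star_eq_conjTranspose]
  exact (posSemidef_diagonal_iff.mpr fun i => by simp [Real.sqrt_nonneg]).mul_mul_conjTranspose_same _

lemma Matrix.PosSemidef.sqrt_mul_self {A : Matrix n n ℂ} (h : A.PosSemidef) :
    h.sqrt * h.sqrt = A := by
  unfold Matrix.PosSemidef.sqrt
  have hsU : star (h.1.eigenvectorUnitary : Matrix n n ℂ) * (h.1.eigenvectorUnitary : Matrix n n ℂ) = 1 :=
    mem_unitaryGroup_iff'.mp h.1.eigenvectorUnitary.2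
  conv_rhs => rw [h.1.spectral_theorem, Unitary.conjStarAlgAut_apply]
  have hd : diagonal ((↑) ∘ (√·) ∘ h.1.eigenvalues) * diagonal ((↑) ∘ (√·) ∘ h.1.eigenvalues)
      = diagonal (RCLike.ofReal ∘ h.1.eigenvalues : n → ℂ) := by
    rw [diagonal_mul_diagonal]
    congr 1
    ext i
    simp [← Complex.ofReal_mul, Real.mul_self_sqrt (h.eigenvalues_nonneg i)]
  rw [← hd]
  simp only [mul_assoc]
  rw [← mul_assoc (star _) _ (diagonal _ * _), hsU, one_mul]

noncomputable def embM (X : Matrix n n ℂ) : EuclideanSpace ℂ (n × n) :=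
  WithLp.toLp 2 (fun p : n × n => X p.1 p.2)

lemma inner_embM (X Y : Matrix n n ℂ) : ⟪embM X, embM Y⟫_ℂ = (Xᴴ * Y).trace := by
  simp only [embM, PiLp.inner_apply, PiLp.toLp_apply, RCLike.inner_apply, Matrix.trace, Matrix.diag,
    Matrix.mul_apply, Matrix.conjTranspose_apply, Fintype.sum_prod_type]
  rw [Finset.sum_comm]
  simp [mul_comm]

lemma norm_embM (X : Matrix n n ℂ) : ‖embM X‖ = Real.sqrt ((Xᴴ * X).trace.re) := by
  rw [@norm_eq_sqrt_re_inner ℂ, inner_embM]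
  rfl

lemma frob_cs (X Y : Matrix n n ℂ) :
    ‖(Xᴴ * Y).trace‖ ≤ Real.sqrt ((Xᴴ * X).trace.re) * Real.sqrt ((Yᴴ * Y).trace.re) := by
  rw [← inner_embM, ← norm_embM, ← norm_embM]
  exact norm_inner_le_norm _ _

lemma exists_polar (A : Matrix n n ℂ) :
    ∃ U : Matrix n n ℂ, Uᴴ * U = 1 ∧
      A = U * (Matrix.posSemidef_conjTranspose_mul_self A).sqrt := by
  have hP := Matrix.posSemidef_conjTranspose_mul_self A
  set hH := hP.1 with hHdef
  set V : Matrix n n ℂ := (hH.eigenvectorUnitary : Matrix n n ℂ) with hV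
  set d : n → ℝ := hH.eigenvalues with hd
  have hsV : star V * V = 1 := mem_unitaryGroup_iff'.mp hH.eigenvectorUnitary.2
  have hVs : V * star V = 1 := mem_unitaryGroup_iff.mp hH.eigenvectorUnitary.2
  set M : Matrix n n ℂ := A * V with hM
  have hMM : Mᴴ * M = diagonal (RCLike.ofReal ∘ d) := by
    have h1 : Mᴴ * M = star V * (Aᴴ * A) * V := by
      simp [hM, conjTranspose_mul, star_eq_conjTranspose, mul_assoc]
    rw [h1, hH.spectral_theorem, Unitary.conjStarAlgAut_apply]
    calc star V * (V * diagonal (RCLike.ofReal ∘ d) * star V) * V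
        = (star V * V) * diagonal (RCLike.ofReal ∘ d) * (star V * V) := by
          simp only [mul_assoc]
      _ = diagonal (RCLike.ofReal ∘ d) := by rw [hsV]; simp
  set col : n → EuclideanSpace ℂ n := fun i => WithLp.toLp 2 (fun j => M j i) with hcol
  have hinner : ∀ i k, ⟪col i, col k⟫_ℂ = diagonal (RCLike.ofReal ∘ d) i k := by
    intro i k
    rw [← hMM]
    simp [hcol, PiLp.inner_apply, PiLp.toLp_apply, mul_comm, RCLike.inner_apply, Matrix.mul_apply,
      Matrix.conjTranspose_apply]
  set s : Set n := {i | d i ≠ 0} with hs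
  set v : n → EuclideanSpace ℂ n := fun i => ((Real.sqrt (d i) : ℂ))⁻¹ • col i with hv'
  have hON : Orthonormal ℂ (s.restrict v) := by
    rw [orthonormal_iff_ite]
    rintro ⟨i, hi⟩ ⟨k, hk⟩
    simp only [Set.restrict, Set.restrict_apply, hv', inner_smul_left, inner_smul_right, hinner]
    by_cases hik : i = k
    · subst hik
      simp only [diagonal_apply_eq, Function.comp_apply, Subtype.mk.injEq, if_pos rfl]
      have hdi : (0:ℝ) < d i := lt_of_le_of_ne (hP.eigenvalues_nonneg i) (Ne.symm hi)
      have hsq : (Real.sqrt (d i) : ℂ) * (Real.sqrt (d i) : ℂ) = (d i : ℂ) := by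
        rw [← Complex.ofReal_mul, Real.mul_self_sqrt hdi.le]
      rw [map_inv₀, Complex.conj_ofReal]
      field_simp
      simp only [if_pos trivial, one_mul, mul_one]
      rw [sq, hsq]
      rfl
    · simp only [Subtype.mk.injEq, if_neg hik, diagonal_apply_ne _ hik, mul_zero]
  obtain ⟨b, hb⟩ := hON.exists_orthonormalBasis_extension_of_card_eq
    (by simp [finrank_euclideanSpace])
  set W : Matrix n n ℂ := Matrix.of (fun j i => b i j) with hW
  have hWW : Wᴴ * W = 1 := by
    ext i k
    have := orthonormal_iff_ite.mp b.orthonormal i k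
    simp only [PiLp.inner_apply, RCLike.inner_apply] at this
    simp only [Matrix.mul_apply, Matrix.conjTranspose_apply, hW, Matrix.of_apply,
      Matrix.one_apply, star]
    rw [← this]
    refine Finset.sum_congr rfl fun j _ => ?_
    rw [mul_comm]
    rfl
  have hWM : W * diagonal ((↑) ∘ Real.sqrt ∘ d) = M := by
    ext j i
    rw [Matrix.mul_diagonal]
    by_cases hdi : d i = 0
    · have hcz : col i = 0 := by
        rw [← inner_self_eq_zero (𝕜 := ℂ)]
        rw [hinner]
        simp [hdi]
      have : M j i = 0 := by
        have := congrFun (congrArg WithLp.ofLp hcz) j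
        simpa [hcol] using this
      simp [hdi, this]
    · have hbv : b i = v i := hb i hdi
      have hpos : (0:ℝ) < d i := lt_of_le_of_ne (hP.eigenvalues_nonneg i) (Ne.symm hdi)
      have hsne : (Real.sqrt (d i) : ℂ) ≠ 0 := by
        simp [Real.sqrt_ne_zero'.mpr hpos]
      have : W j i = ((Real.sqrt (d i) : ℂ))⁻¹ * M j i := by
        simp only [hW, Matrix.of_apply, hbv, hv']
        rfl
      rw [this]
      field_simp
      simp only [Function.comp_apply]
      ring
  have hD : diagonal ((↑) ∘ Real.sqrt ∘ d) = diagonal (Complex.ofReal ∘ Real.sqrt ∘ d) := rfl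
  refine ⟨W * star V, ?_, ?_⟩
  · have h1 : (W * star V)ᴴ * (W * star V) = V * (Wᴴ * W) * star V := by
      simp [conjTranspose_mul, star_eq_conjTranspose, mul_assoc]
    rw [h1, hWW, mul_one, hVs]
  · show A = W * star V * hP.sqrt
    have hsqrt : hP.sqrt = V * diagonal ((↑) ∘ Real.sqrt ∘ d) * star V := rfl
    have hA : A = M * star V := by rw [hM, mul_assoc, hVs, mul_one]
    rw [hsqrt, hA, hD, ← hWM]
    have h2 : W * diagonal (Complex.ofReal ∘ Real.sqrt ∘ d)
        = W * star V * (V * diagonal (Complex.ofReal ∘ Real.sqrt ∘ d)) := by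
      rw [mul_assoc W (star V), ← mul_assoc (star V), hsV, one_mul]
    rw [h2]
    simp only [mul_assoc]

lemma msqrt_eq {A : Matrix n n ℂ} (h : A.PosSemidef) : msqrt A = h.sqrt := dif_pos h

lemma msqrt_posSemidef {A : Matrix n n ℂ} (h : A.PosSemidef) : (msqrt A).PosSemidef := by
  rw [msqrt_eq h]; exact h.posSemidef_sqrt

lemma msqrt_mul_self {A : Matrix n n ℂ} (h : A.PosSemidef) : msqrt A * msqrt A = A := by
  rw [msqrt_eq h]; exact h.sqrt_mul_self

lemma msqrt_herm {A : Matrix n n ℂ} (h : A.PosSemidef) : (msqrt A)ᴴ = msqrt A :=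
  (msqrt_posSemidef h).1

lemma psd_trace_re_nonneg {S : Matrix n n ℂ} (hS : S.PosSemidef) : 0 ≤ S.trace.re := by
  rw [Matrix.trace]
  rw [Complex.re_sum]
  refine Finset.sum_nonneg fun i _ => ?_
  have := hS.re_dotProduct_nonneg (Pi.single i 1)
  simpa [dotProduct, Matrix.mulVec, Pi.single_apply, Matrix.diag] using this

lemma psd_trace_real {S : Matrix n n ℂ} (hS : S.PosSemidef) : S.trace = (S.trace.re : ℂ) := by
  have h1 : star S.trace = S.trace := by
    rw [← Matrix.trace_conjTranspose, hS.1]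
  exact (Complex.conj_eq_iff_re.mp h1).symm

lemma traceNorm_nonneg (A : Matrix n n ℂ) : 0 ≤ traceNorm A :=
  psd_trace_re_nonneg (msqrt_posSemidef (Matrix.posSemidef_conjTranspose_mul_self A))

lemma trace_psd_unitary_bound {S : Matrix n n ℂ} (hS : S.PosSemidef) {Y : Matrix n n ℂ}
    (hY : Yᴴ * Y = 1) : ‖(S * Y).trace‖ ≤ S.trace.re := by
  set R := msqrt S with hR
  have hRR : R * R = S := msqrt_mul_self hS
  have hRh : Rᴴ = R := msqrt_herm hS
  have h1 : (S * Y).trace = (Rᴴ * (R * Y)).trace := by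
    rw [hRh, ← mul_assoc, hRR]
  have h2 : (Rᴴ * R).trace.re = S.trace.re := by rw [hRh, hRR]
  have h3 : ((R * Y)ᴴ * (R * Y)).trace.re = S.trace.re := by
    have : (R * Y)ᴴ * (R * Y) = Yᴴ * (S * Y) := by
      rw [conjTranspose_mul, hRh, mul_assoc, ← mul_assoc R R, hRR]
    have hYY : Y * Yᴴ = 1 := by
      exact mul_eq_one_comm.mp hY
    rw [this, Matrix.trace_mul_comm, mul_assoc, hYY, mul_one]
  calc ‖(S * Y).trace‖ = ‖(Rᴴ * (R * Y)).trace‖ := by rw [h1]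
    _ ≤ Real.sqrt ((Rᴴ * R).trace.re) * Real.sqrt (((R * Y)ᴴ * (R * Y)).trace.re) := frob_cs _ _
    _ = S.trace.re := by rw [h2, h3, Real.mul_self_sqrt (psd_trace_re_nonneg hS)]

lemma traceNorm_bound (A : Matrix n n ℂ) {X : Matrix n n ℂ} (hX : Xᴴ * X = 1) :
    ‖(A * X).trace‖ ≤ traceNorm A := by
  obtain ⟨U, hU, hA⟩ := exists_polar A
  have hP := Matrix.posSemidef_conjTranspose_mul_self A
  have hS : msqrt (Aᴴ * A) = hP.sqrt := msqrt_eq hP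
  set S := hP.sqrt with hSdef
  have hSpsd : S.PosSemidef := hP.posSemidef_sqrt
  have h1 : (A * X).trace = (S * (X * U)).trace := by
    rw [hA, mul_assoc, Matrix.trace_mul_comm, mul_assoc]
  have hXU : (X * U)ᴴ * (X * U) = 1 := by
    rw [conjTranspose_mul, mul_assoc, ← mul_assoc Xᴴ, hX, one_mul, hU]
  rw [h1]
  calc ‖(S * (X * U)).trace‖ ≤ S.trace.re := trace_psd_unitary_bound hSpsd hXU
    _ = traceNorm A := by rw [traceNorm, hS]

lemma traceNorm_exists (A : Matrix n n ℂ) :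
    ∃ X : Matrix n n ℂ, Xᴴ * X = 1 ∧ (A * X).trace = (traceNorm A : ℂ) := by
  obtain ⟨U, hU, hA⟩ := exists_polar A
  have hP := Matrix.posSemidef_conjTranspose_mul_self A
  set S := hP.sqrt with hSdef
  have hSpsd : S.PosSemidef := hP.posSemidef_sqrt
  refine ⟨Uᴴ, ?_, ?_⟩
  · rw [conjTranspose_conjTranspose]
    exact mul_eq_one_comm.mp hU
  · have h1 : A * Uᴴ = U * S * Uᴴ := by rw [hA]
    rw [h1, Matrix.trace_mul_cycle, hU, one_mul]
    rw [traceNorm, msqrt_eq hP]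
    exact psd_trace_real hSpsd

lemma key_geom {F : Type*} [NormedAddCommGroup F] [InnerProductSpace ℂ F]
    (u v w : F) (hu : ‖u‖ = 1) (hv : ‖v‖ = 1) (hw : ‖w‖ = 1) (a b : ℝ)
    (ha : ⟪u, v⟫_ℂ = (a : ℂ)) (hb : ⟪v, w⟫_ℂ = (b : ℂ)) :
    a * b - Real.sqrt (1 - a ^ 2) * Real.sqrt (1 - b ^ 2) ≤ (⟪u, w⟫_ℂ).re := by
  set u' := u - (a : ℂ) • v with hu'
  set w' := w - (b : ℂ) • v with hw'
  have hvv : ⟪v, v⟫_ℂ = 1 := by rw [inner_self_eq_norm_sq_to_K, hv]; norm_num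
  have h1 : ⟪u', w'⟫_ℂ = ⟪u, w⟫_ℂ - (a : ℂ) * b := by
    simp only [hu', hw', inner_sub_left, inner_sub_right, inner_smul_left, inner_smul_right,
      ha, hb, hvv, Complex.conj_ofReal]
    ring
  have hnu : ‖u'‖ ^ 2 = 1 - a ^ 2 := by
    rw [hu', @norm_sub_sq ℂ]
    have h2 : ⟪u, (a : ℂ) • v⟫_ℂ = ((a^2 : ℝ) : ℂ) := by
      rw [inner_smul_right, ha]; push_cast; ring
    rw [h2]
    have h3 : ‖(a : ℂ) • v‖ = |a| := by
      rw [norm_smul, hv, mul_one, Complex.norm_real, Real.norm_eq_abs]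
    rw [h3, hu, sq_abs]
    norm_num [Complex.ofReal_re]
    rw [← Complex.ofReal_pow, Complex.ofReal_re]
    ring
  have hnw : ‖w'‖ ^ 2 = 1 - b ^ 2 := by
    rw [hw', @norm_sub_sq ℂ]
    have h2 : ⟪w, (b : ℂ) • v⟫_ℂ = ((b^2 : ℝ) : ℂ) := by
      rw [inner_smul_right, ← inner_conj_symm, hb]
      rw [Complex.conj_ofReal]; push_cast; ring
    rw [h2]
    have h3 : ‖(b : ℂ) • v‖ = |b| := by
      rw [norm_smul, hv, mul_one, Complex.norm_real, Real.norm_eq_abs]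
    rw [h3, hw, sq_abs]
    norm_num [Complex.ofReal_re]
    rw [← Complex.ofReal_pow, Complex.ofReal_re]
    ring
  have hun : ‖u'‖ = Real.sqrt (1 - a ^ 2) := by
    rw [← hnu, Real.sqrt_sq (norm_nonneg _)]
  have hwn : ‖w'‖ = Real.sqrt (1 - b ^ 2) := by
    rw [← hnw, Real.sqrt_sq (norm_nonneg _)]
  have hcs : ‖⟪u', w'⟫_ℂ‖ ≤ ‖u'‖ * ‖w'‖ := norm_inner_le_norm _ _
  have hre : -(‖u'‖ * ‖w'‖) ≤ (⟪u', w'⟫_ℂ).re := by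
    have h4 : |(⟪u', w'⟫_ℂ).re| ≤ ‖⟪u', w'⟫_ℂ‖ := Complex.abs_re_le_norm _
    have := neg_abs_le (⟪u', w'⟫_ℂ).re
    linarith
  have h5 : (⟪u', w'⟫_ℂ).re = (⟪u, w⟫_ℂ).re - a * b := by
    rw [h1]
    simp [Complex.sub_re, Complex.mul_re]
  rw [hun, hwn] at hre
  linarith

lemma endgame_real (a b f p q : ℝ) (ha0 : 0 ≤ a) (ha1 : a ≤ 1) (hb0 : 0 ≤ b) (hb1 : b ≤ 1)
    (hp : p = Real.sqrt (1 - a ^ 2)) (hq : q = Real.sqrt (1 - b ^ 2)) (hh : p ^ 2 + q ^ 2 ≤ 1)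
    (hf0 : 0 ≤ f) (hkey : a * b - p * q ≤ f) : Real.sqrt (1 - f ^ 2) ≤ p * b + q * a := by
  have hp0 : 0 ≤ p := hp ▸ Real.sqrt_nonneg _
  have hq0 : 0 ≤ q := hq ▸ Real.sqrt_nonneg _
  have hp2 : p ^ 2 = 1 - a ^ 2 := by rw [hp]; exact Real.sq_sqrt (by nlinarith)
  have hq2 : q ^ 2 = 1 - b ^ 2 := by rw [hq]; exact Real.sq_sqrt (by nlinarith)
  have hpb : p ≤ b := by
    have h1 : 1 - a ^ 2 ≤ b ^ 2 := by nlinarith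
    calc p = Real.sqrt (1 - a ^ 2) := hp
      _ ≤ Real.sqrt (b ^ 2) := Real.sqrt_le_sqrt h1
      _ = b := Real.sqrt_sq hb0
  have hqa : q ≤ a := by
    have h1 : 1 - b ^ 2 ≤ a ^ 2 := by nlinarith
    calc q = Real.sqrt (1 - b ^ 2) := hq
      _ ≤ Real.sqrt (a ^ 2) := Real.sqrt_le_sqrt h1
      _ = a := Real.sqrt_sq ha0
  have hc0 : 0 ≤ a * b - p * q := by nlinarith
  have hsq : (a * b - p * q) ^ 2 ≤ f ^ 2 := by nlinarith
  have hid : (p * b + q * a) ^ 2 = 1 - (a * b - p * q) ^ 2 := by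
    linear_combination (b ^ 2 + q ^ 2) * hp2 + hq2
  have hrhs0 : 0 ≤ p * b + q * a := by positivity
  calc Real.sqrt (1 - f ^ 2) ≤ Real.sqrt ((p * b + q * a) ^ 2) := by
        apply Real.sqrt_le_sqrt
        rw [hid]
        linarith
    _ = p * b + q * a := Real.sqrt_sq hrhs0

theorem stmt_2 (ρ σ τ : Matrix n n ℂ)
    (hρ : IsDensity ρ) (hσ : IsDensity σ) (hτ : IsDensity τ)
    (h : purifiedDist ρ σ ^ 2 + purifiedDist σ τ ^ 2 ≤ 1) :
    purifiedDist ρ τ ≤ purifiedDist ρ σ * fidelity σ τ + purifiedDist σ τ * fidelity ρ σ := by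
  obtain ⟨hρp, hρt⟩ := hρ
  obtain ⟨hσp, hσt⟩ := hσ
  obtain ⟨hτp, hτt⟩ := hτ
  set R1 := msqrt ρ with hR1d
  set R2 := msqrt σ with hR2d
  set R3 := msqrt τ with hR3d
  have hR1h : R1ᴴ = R1 := msqrt_herm hρp
  have hR1m : R1 * R1 = ρ := msqrt_mul_self hρp
  have hR2h : R2ᴴ = R2 := msqrt_herm hσp
  have hR2m : R2 * R2 = σ := msqrt_mul_self hσp
  have hR3h : R3ᴴ = R3 := msqrt_herm hτp
  have hR3m : R3 * R3 = τ := msqrt_mul_self hτp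
  obtain ⟨U, hU, hUtr⟩ := traceNorm_exists (R1 * R2)
  obtain ⟨X2, hX2, hX2tr⟩ := traceNorm_exists (R2 * R3)
  set a := fidelity ρ σ with hadef
  set b := fidelity σ τ with hbdef
  have haRR : a = traceNorm (R1 * R2) := rfl
  have hbRR : b = traceNorm (R2 * R3) := rfl
  set Vm := X2 * U with hVmdef
  have hVmU : Vmᴴ * Vm = 1 := by
    rw [hVmdef, conjTranspose_mul, mul_assoc, ← mul_assoc X2ᴴ, hX2, one_mul, hU]
  have hUUs : U * Uᴴ = 1 := mul_eq_one_comm.mp hU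
  have hVmVs : Vm * Vmᴴ = 1 := mul_eq_one_comm.mp hVmU
  set u := embM R1 with hudef
  set v := embM (R2 * U) with hvdef
  set w := embM (R3 * Vm) with hwdef
  have hnu : ‖u‖ = 1 := by
    rw [hudef, norm_embM, hR1h, hR1m, hρt]
    norm_num
  have hnv : ‖v‖ = 1 := by
    rw [hvdef, norm_embM]
    have e1 : (R2 * U)ᴴ * (R2 * U) = Uᴴ * (σ * U) := by
      rw [conjTranspose_mul, hR2h, mul_assoc, ← mul_assoc R2 R2, hR2m]
    rw [e1, Matrix.trace_mul_comm, mul_assoc, hUUs, mul_one, hσt]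
    norm_num
  have hnw : ‖w‖ = 1 := by
    rw [hwdef, norm_embM]
    have e1 : (R3 * Vm)ᴴ * (R3 * Vm) = Vmᴴ * (τ * Vm) := by
      rw [conjTranspose_mul, hR3h, mul_assoc, ← mul_assoc R3 R3, hR3m]
    rw [e1, Matrix.trace_mul_comm, mul_assoc, hVmVs, mul_one, hτt]
    norm_num
  have ha : ⟪u, v⟫_ℂ = (a : ℂ) := by
    rw [hudef, hvdef, inner_embM, hR1h, ← mul_assoc, hUtr, haRR]
  have hb : ⟪v, w⟫_ℂ = (b : ℂ) := by
    rw [hvdef, hwdef, inner_embM]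
    have e2 : (R2 * U)ᴴ * (R3 * Vm) = Uᴴ * (R2 * R3 * X2 * U) := by
      rw [conjTranspose_mul, hR2h, hVmdef]
      simp only [mul_assoc]
    rw [e2, Matrix.trace_mul_comm, mul_assoc, hUUs, mul_one, hX2tr, hbRR]
  have hf3 : (⟪u, w⟫_ℂ).re ≤ fidelity ρ τ := by
    rw [hudef, hwdef, inner_embM, hR1h, ← mul_assoc]
    have h1 := traceNorm_bound (R1 * R3) hVmU
    have h2 : ((R1 * R3 * Vm).trace).re ≤ ‖(R1 * R3 * Vm).trace‖ := by
      exact Complex.re_le_norm _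
    have : fidelity ρ τ = traceNorm (R1 * R3) := rfl
    linarith
  have ha0 : 0 ≤ a := haRR ▸ traceNorm_nonneg _
  have hb0 : 0 ≤ b := hbRR ▸ traceNorm_nonneg _
  have ha1 : a ≤ 1 := by
    have h1 : ‖⟪u, v⟫_ℂ‖ ≤ 1 := by
      have := norm_inner_le_norm (𝕜 := ℂ) u v
      rwa [hnu, hnv, mul_one] at this
    rw [ha, Complex.norm_real, Real.norm_eq_abs] at h1
    exact (abs_le.mp h1).2
  have hb1 : b ≤ 1 := by
    have h1 : ‖⟪v, w⟫_ℂ‖ ≤ 1 := by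
      have := norm_inner_le_norm (𝕜 := ℂ) v w
      rwa [hnv, hnw, mul_one] at this
    rw [hb, Complex.norm_real, Real.norm_eq_abs] at h1
    exact (abs_le.mp h1).2
  have key := key_geom u v w hnu hnv hnw a b ha hb
  have hF30 : 0 ≤ fidelity ρ τ := traceNorm_nonneg _
  have hkey : a * b - purifiedDist ρ σ * purifiedDist σ τ ≤ fidelity ρ τ := by
    have e1 : purifiedDist ρ σ = Real.sqrt (1 - a ^ 2) := rfl
    have e2 : purifiedDist σ τ = Real.sqrt (1 - b ^ 2) := rfl
    rw [e1, e2]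
    exact le_trans key hf3
  have egoal : purifiedDist ρ τ = Real.sqrt (1 - fidelity ρ τ ^ 2) := rfl
  rw [egoal]
  exact endgame_real a b (fidelity ρ τ) (purifiedDist ρ σ) (purifiedDist σ τ)
    ha0 ha1 hb0 hb1 rfl rfl h hF30 hkey
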